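/- Let M be a real symmetric m×m matrix with strictly positive entries, m > 2. Suppose M has two orthogonal eigenvectors v, w with strictly positive eigenvalues and a third eigenvector u orthogonal to both with nonnegative eigenvalue. Then there exists an index i and a proper subset I = {1,…,m}\{i} such that the principal submatrix M_I has a positive eigenspace of dimension at least two. -/

import Mathlib

open Matrix

/-- Key inductive step of the hyperbolic Sylvester criterion: if a symmetric positive
matrix (`m > 2`) has two orthogonal eigenvectors with positive eigenvalues and a third
eigenvector, orthogonal to both, with nonnegative eigenvalue, then some principal
submatrix obtained by deleting one row and column has positive eigenspace of
dimension at least two. -/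
theorem stmt_10 (m : ℕ) (hm : 2 < m) (M : Matrix (Fin m) (Fin m) ℝ) (hM : M.IsHermitian)
    (hpos : ∀ i j, 0 < M i j)
    (v w u : Fin m → ℝ) (a b c : ℝ)
    (hv : v ≠ 0) (hw : w ≠ 0) (hu : u ≠ 0)
    (ha : 0 < a) (hb : 0 < b) (hc : 0 ≤ c)
    (hev : M.mulVec v = a • v) (hew : M.mulVec w = b • w) (heu : M.mulVec u = c • u)
    (hvw : v ⬝ᵥ w = 0) (huv : u ⬝ᵥ v = 0) (huw : u ⬝ᵥ w = 0) :
    ∃ i : Fin m,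
      ∃ hI : (M.submatrix (fun j : {j : Fin m // j ≠ i} => (j : Fin m))
        (fun j : {j : Fin m // j ≠ i} => (j : Fin m))).IsHermitian,
      2 ≤ (Finset.univ.filter (fun j => 0 < hI.eigenvalues j)).card := by
  classical
  obtain ⟨i, hui⟩ : ∃ i, u i ≠ 0 := Function.ne_iff.mp hu
  have hI' : (M.submatrix (fun j : {j : Fin m // j ≠ i} => (j : Fin m))
      (fun j : {j : Fin m // j ≠ i} => (j : Fin m))).IsHermitian :=
    hM.submatrix _
  refine ⟨i, hI', ?_⟩
  set A : Matrix {j : Fin m // j ≠ i} {j : Fin m // j ≠ i} ℝ :=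
    M.submatrix (fun j : {j : Fin m // j ≠ i} => (j : Fin m))
      (fun j : {j : Fin m // j ≠ i} => (j : Fin m)) with hAdef
  set α : ℝ := v i / u i with hα
  set β : ℝ := w i / u i with hβ
  set x : Fin m → ℝ := v - α • u with hxdef
  set y : Fin m → ℝ := w - β • u with hydef
  have hxi : x i = 0 := by
    simp [hxdef, hα, div_mul_cancel₀ _ hui]
  have hyi : y i = 0 := by
    simp [hydef, hβ, div_mul_cancel₀ _ hui]
  -- positivity of self dot products
  have dot_nonneg : ∀ z : Fin m → ℝ, 0 ≤ z ⬝ᵥ z := fun z =>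
    Finset.sum_nonneg fun j _ => mul_self_nonneg _
  have hvv : 0 < v ⬝ᵥ v :=
    lt_of_le_of_ne (dot_nonneg v) fun e => hv (dotProduct_self_eq_zero.mp e.symm)
  have hww : 0 < w ⬝ᵥ w :=
    lt_of_le_of_ne (dot_nonneg w) fun e => hw (dotProduct_self_eq_zero.mp e.symm)
  -- quadratic form on span of v, w, u
  have hq : ∀ s t r : ℝ, (s • v + t • w + r • u) ⬝ᵥ (M *ᵥ (s • v + t • w + r • u)) =
      s ^ 2 * a * (v ⬝ᵥ v) + t ^ 2 * b * (w ⬝ᵥ w) + r ^ 2 * c * (u ⬝ᵥ u) := by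
    intro s t r
    have h1 : M *ᵥ (s • v + t • w + r • u) = s • (a • v) + t • (b • w) + r • (c • u) := by
      simp [mulVec_add, mulVec_smul, hev, hew, heu]
    rw [h1]
    have hwv : w ⬝ᵥ v = 0 := by rw [dotProduct_comm]; exact hvw
    have hvu : v ⬝ᵥ u = 0 := by rw [dotProduct_comm]; exact huv
    have hwu : w ⬝ᵥ u = 0 := by rw [dotProduct_comm]; exact huw
    simp only [dotProduct_add, add_dotProduct, dotProduct_smul, smul_dotProduct,
      smul_eq_mul, hvw, hwv, hvu, huv, hwu, huw]
    ring
  -- restriction lemma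
  have hres : ∀ z : Fin m → ℝ, z i = 0 →
      ((fun j : {j : Fin m // j ≠ i} => z j) ⬝ᵥ (A *ᵥ fun j : {j : Fin m // j ≠ i} => z j))
        = z ⬝ᵥ (M *ᵥ z) := by
    intro z hz
    have inner : ∀ j : Fin m,
        (∑ k : {k : Fin m // k ≠ i}, M j k * z k) = ∑ k, M j k * z k := by
      intro j
      rw [← Finset.sum_subtype (Finset.univ.erase i) (fun k => by simp)
        (fun k => M j k * z k)]
      exact Finset.sum_erase _ (by rw [hz, mul_zero])
    simp only [dotProduct, mulVec, hAdef, submatrix_apply]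
    calc (∑ j : {j : Fin m // j ≠ i}, z j *
            ∑ k : {k : Fin m // k ≠ i}, M j k * z k)
        = ∑ j : {j : Fin m // j ≠ i}, z j * ∑ k, M (j : Fin m) k * z k := by
          exact Finset.sum_congr rfl fun j _ => by rw [inner]
      _ = ∑ j, z j * ∑ k, M j k * z k := by
          rw [← Finset.sum_subtype (Finset.univ.erase i) (fun k => by simp)
            (fun j => z j * ∑ k, M j k * z k)]
          exact Finset.sum_erase _ (by rw [hz, zero_mul])
      _ = ∑ j, z j * (M *ᵥ z) j := rfl
  -- spectral expansion of the submatrix quadratic form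
  set U : Matrix {j : Fin m // j ≠ i} {j : Fin m // j ≠ i} ℝ :=
    ↑(Matrix.IsHermitian.eigenvectorUnitary hI') with hUdef
  have hquad : ∀ p : {j : Fin m // j ≠ i} → ℝ,
      p ⬝ᵥ (A *ᵥ p) = ∑ j, hI'.eigenvalues j * ((p ᵥ* U) j) ^ 2 := by
    intro p
    have hstar : (star U) *ᵥ p = p ᵥ* U := by
      rw [star_eq_conjTranspose, conjTranspose_eq_transpose_of_trivial, mulVec_transpose]
    conv_lhs => rw [hI'.spectral_theorem]
    rw [Unitary.conjStarAlgAut_apply, ← mulVec_mulVec, ← mulVec_mulVec, dotProduct_mulVec, hstar]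
    simp only [dotProduct, mulVec_diagonal, Function.comp_apply, RCLike.ofReal_real_eq_id,
      id_eq]
    exact Finset.sum_congr rfl fun j _ => by ring
  -- restricted vectors
  set x' : {j : Fin m // j ≠ i} → ℝ := fun j => x j with hx'def
  set y' : {j : Fin m // j ≠ i} → ℝ := fun j => y j with hy'def
  -- positivity of the submatrix quadratic form on nontrivial combinations
  have hpos2 : ∀ s t : ℝ, (s ≠ 0 ∨ t ≠ 0) →
      0 < (s • x' + t • y') ⬝ᵥ (A *ᵥ (s • x' + t • y')) := by
    intro s t hst
    have hzi : (s • x + t • y) i = 0 := by simp [hxi, hyi]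
    have hrw : (fun j : {j : Fin m // j ≠ i} => (s • x + t • y) j) = s • x' + t • y' := by
      funext j; simp [hx'def, hy'def]
    have h := hres (s • x + t • y) hzi
    rw [hrw] at h
    rw [h]
    have hz : s • x + t • y = s • v + t • w + (-(s * α + t * β)) • u := by
      funext j
      simp only [hxdef, hydef, Pi.add_apply, Pi.smul_apply, Pi.sub_apply, Pi.neg_apply,
        smul_eq_mul]
      ring
    rw [hz, hq]
    have t3 : 0 ≤ (-(s * α + t * β)) ^ 2 * c * (u ⬝ᵥ u) :=
      mul_nonneg (mul_nonneg (sq_nonneg _) hc) (dot_nonneg u)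
    rcases hst with hs | ht
    · have t1 : 0 < s ^ 2 * a * (v ⬝ᵥ v) := by positivity
      have t2 : 0 ≤ t ^ 2 * b * (w ⬝ᵥ w) :=
        mul_nonneg (mul_nonneg (sq_nonneg _) hb.le) hww.le
      linarith
    · have t2 : 0 < t ^ 2 * b * (w ⬝ᵥ w) := by positivity
      have t1 : 0 ≤ s ^ 2 * a * (v ⬝ᵥ v) :=
        mul_nonneg (mul_nonneg (sq_nonneg _) ha.le) hvv.le
      linarith
  -- the counting argument
  by_contra hcard
  push_neg at hcard
  set S : Finset {j : Fin m // j ≠ i} :=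
    Finset.univ.filter (fun j => 0 < hI'.eigenvalues j) with hSdef
  have hS1 : S.card ≤ 1 := by omega
  have hnotS : ∀ j, j ∉ S → hI'.eigenvalues j ≤ 0 := by
    intro j hj
    by_contra h
    exact hj (Finset.mem_filter.mpr ⟨Finset.mem_univ _, lt_of_not_ge h⟩)
  have main : ∀ s t : ℝ, (s ≠ 0 ∨ t ≠ 0) →
      (∀ j ∈ S, (((s • x' + t • y') ᵥ* U) j = 0)) → False := by
    intro s t hst hcz
    have h1 := hpos2 s t hst
    rw [hquad] at h1
    have h2 : (∑ j, hI'.eigenvalues j * (((s • x' + t • y') ᵥ* U) j) ^ 2) ≤ 0 := by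
      refine Finset.sum_nonpos fun j _ => ?_
      by_cases hj : j ∈ S
      · rw [hcz j hj]; simp
      · exact mul_nonpos_iff.mpr (Or.inr ⟨hnotS j hj, sq_nonneg _⟩)
    linarith
  rcases Finset.eq_empty_or_nonempty S with hSe | ⟨j0, hj0⟩
  · exact main 1 0 (Or.inl one_ne_zero) (fun j hj => by simp [hSe] at hj)
  · have huniq : ∀ j ∈ S, j = j0 := fun j hj => Finset.card_le_one.mp hS1 j hj j0 hj0
    set px : ℝ := (x' ᵥ* U) j0 with hpx
    set py : ℝ := (y' ᵥ* U) j0 with hpy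
    have hlin : ∀ s t : ℝ, ((s • x' + t • y') ᵥ* U) j0 = s * px + t * py := by
      intro s t
      rw [add_vecMul, smul_vecMul, smul_vecMul]
      simp [hpx, hpy]
    by_cases hp : px = 0
    · refine main 1 0 (Or.inl one_ne_zero) fun j hj => ?_
      rw [huniq j hj, hlin]
      simp [hp]
    · refine main py (-px) (Or.inr (neg_ne_zero.mpr hp)) fun j hj => ?_
      rw [huniq j hj, hlin]
      ring
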